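/- For every n ≥ 1, every endomorphism (f₁,f₂,f₃,f₄) of the representation N_n of Q satisfies f₁=f₂=f₃=f₄ and f₁∘J_n(0)=J_n(0)∘f₁; the k-algebra map k[X]/(Xⁿ) → End(N_n) sending the class of X to the endomorphism (J_n(0),J_n(0),J_n(0),J_n(0)) is an isomorphism of k-algebras. In particular End(N_n) is a local ring and N_n is indecomposable. -/

import Mathlib

variable (k : Type) [Field k]

/-- A finite-dimensional representation of the quiver `Q` with vertices `1,2,3,4`
and arrows `a : 1 → 2`, `b : 1 → 3`, `c : 2 → 4`, `d : 3 → 4`. -/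
structure QRep where
  V1 : Type
  V2 : Type
  V3 : Type
  V4 : Type
  [acg1 : AddCommGroup V1]
  [acg2 : AddCommGroup V2]
  [acg3 : AddCommGroup V3]
  [acg4 : AddCommGroup V4]
  [mod1 : Module k V1]
  [mod2 : Module k V2]
  [mod3 : Module k V3]
  [mod4 : Module k V4]
  [fin1 : FiniteDimensional k V1]
  [fin2 : FiniteDimensional k V2]
  [fin3 : FiniteDimensional k V3]
  [fin4 : FiniteDimensional k V4]
  ma : V1 →ₗ[k] V2
  mb : V1 →ₗ[k] V3
  mc : V2 →ₗ[k] V4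
  md : V3 →ₗ[k] V4

attribute [instance] QRep.acg1 QRep.acg2 QRep.acg3 QRep.acg4
  QRep.mod1 QRep.mod2 QRep.mod3 QRep.mod4
  QRep.fin1 QRep.fin2 QRep.fin3 QRep.fin4

variable {k}

/-- Morphisms of representations of `Q`. -/
@[ext]
structure QHom (M N : QRep k) where
  f1 : M.V1 →ₗ[k] N.V1
  f2 : M.V2 →ₗ[k] N.V2
  f3 : M.V3 →ₗ[k] N.V3
  f4 : M.V4 →ₗ[k] N.V4
  comm_a : f2 ∘ₗ M.ma = N.ma ∘ₗ f1
  comm_b : f3 ∘ₗ M.mb = N.mb ∘ₗ f1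
  comm_c : f4 ∘ₗ M.mc = N.mc ∘ₗ f2
  comm_d : f4 ∘ₗ M.md = N.md ∘ₗ f3

/-- Two representations are isomorphic iff there is a morphism all of whose
components are bijective. -/
def QIso (M N : QRep k) : Prop :=
  ∃ f : QHom M N, Function.Bijective f.f1 ∧ Function.Bijective f.f2 ∧
    Function.Bijective f.f3 ∧ Function.Bijective f.f4

/-- The zero representation(s). -/
def QRep.IsZeroRep (M : QRep k) : Prop :=
  Subsingleton M.V1 ∧ Subsingleton M.V2 ∧ Subsingleton M.V3 ∧ Subsingleton M.V4

/-- Vertexwise direct sum of representations. -/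
def QRep.dsum (M N : QRep k) : QRep k where
  V1 := M.V1 × N.V1
  V2 := M.V2 × N.V2
  V3 := M.V3 × N.V3
  V4 := M.V4 × N.V4
  ma := M.ma.prodMap N.ma
  mb := M.mb.prodMap N.mb
  mc := M.mc.prodMap N.mc
  md := M.md.prodMap N.md

/-- Direct sum of `n` copies of a representation. -/
def QRep.dpow (M : QRep k) (n : ℕ) : QRep k where
  V1 := Fin n → M.V1
  V2 := Fin n → M.V2
  V3 := Fin n → M.V3
  V4 := Fin n → M.V4
  ma := M.ma.compLeft (Fin n)
  mb := M.mb.compLeft (Fin n)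
  mc := M.mc.compLeft (Fin n)
  md := M.md.compLeft (Fin n)

/-- A representation is indecomposable if it is nonzero and not isomorphic to a
direct sum of two nonzero representations. -/
def QRep.Indecomposable (M : QRep k) : Prop :=
  ¬ M.IsZeroRep ∧ ∀ A B : QRep k, QIso M (A.dsum B) → A.IsZeroRep ∨ B.IsZeroRep

/-- `0 → A → B → C → 0` is short exact (vertexwise). -/
def QShortExact {A B C : QRep k} (f : QHom A B) (g : QHom B C) : Prop :=
  (Function.Injective f.f1 ∧ Function.Injective f.f2 ∧
    Function.Injective f.f3 ∧ Function.Injective f.f4) ∧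
  (Function.Surjective g.f1 ∧ Function.Surjective g.f2 ∧
    Function.Surjective g.f3 ∧ Function.Surjective g.f4) ∧
  (LinearMap.range f.f1 = LinearMap.ker g.f1 ∧ LinearMap.range f.f2 = LinearMap.ker g.f2 ∧
    LinearMap.range f.f3 = LinearMap.ker g.f3 ∧ LinearMap.range f.f4 = LinearMap.ker g.f4)

variable (k)

/-- The `n×n` Jordan block with eigenvalue `lam`, as a linear endomorphism of `kⁿ`. -/
def jordan (n : ℕ) (lam : k) : (Fin n → k) →ₗ[k] (Fin n → k) :=
  Matrix.mulVecLin (Matrix.of fun i j : Fin n =>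
    if i = j then lam else if (i : ℕ) + 1 = (j : ℕ) then 1 else 0)

/-- The representation `M_n(λ) = (kⁿ,kⁿ,kⁿ,kⁿ; id,id,id,J_n(λ))`. -/
def Mlam (n : ℕ) (lam : k) : QRep k where
  V1 := Fin n → k
  V2 := Fin n → k
  V3 := Fin n → k
  V4 := Fin n → k
  ma := LinearMap.id
  mb := LinearMap.id
  mc := LinearMap.id
  md := jordan k n lam

/-- The indecomposable projective `P₁ = (k,k,k,k²)`. -/
def P1 : QRep k where
  V1 := k
  V2 := k
  V3 := k
  V4 := k × k
  ma := LinearMap.id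
  mb := LinearMap.id
  mc := LinearMap.inl k k k
  md := LinearMap.inr k k k

/-- The indecomposable projective `P₂ = (0,k,0,k)`. -/
def P2 : QRep k where
  V1 := Fin 0 → k
  V2 := k
  V3 := Fin 0 → k
  V4 := k
  ma := 0
  mb := 0
  mc := LinearMap.id
  md := 0

/-- The indecomposable projective `P₃ = (0,0,k,k)`. -/
def P3 : QRep k where
  V1 := Fin 0 → k
  V2 := Fin 0 → k
  V3 := k
  V4 := k
  ma := 0
  mb := 0
  mc := 0
  md := LinearMap.id

/-- The indecomposable projective `P₄ = (0,0,0,k)`. -/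
def P4 : QRep k where
  V1 := Fin 0 → k
  V2 := Fin 0 → k
  V3 := Fin 0 → k
  V4 := k
  ma := 0
  mb := 0
  mc := 0
  md := 0
variable {k}

lemma QHom.comm_a_apply {M N : QRep k} (f : QHom M N) (x : M.V1) :
    f.f2 (M.ma x) = N.ma (f.f1 x) := LinearMap.congr_fun f.comm_a x

lemma QHom.comm_b_apply {M N : QRep k} (f : QHom M N) (x : M.V1) :
    f.f3 (M.mb x) = N.mb (f.f1 x) := LinearMap.congr_fun f.comm_b x

lemma QHom.comm_c_apply {M N : QRep k} (f : QHom M N) (x : M.V2) :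
    f.f4 (M.mc x) = N.mc (f.f2 x) := LinearMap.congr_fun f.comm_c x

lemma QHom.comm_d_apply {M N : QRep k} (f : QHom M N) (x : M.V3) :
    f.f4 (M.md x) = N.md (f.f3 x) := LinearMap.congr_fun f.comm_d x

/-- The identity morphism of a representation. -/
def QHom.idHom (M : QRep k) : QHom M M :=
  ⟨LinearMap.id, LinearMap.id, LinearMap.id, LinearMap.id, by simp, by simp, by simp, by simp⟩

/-- Composition of morphisms of representations. -/
def QHom.comp {L M N : QRep k} (g : QHom M N) (f : QHom L M) : QHom L N where
  f1 := g.f1 ∘ₗ f.f1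
  f2 := g.f2 ∘ₗ f.f2
  f3 := g.f3 ∘ₗ f.f3
  f4 := g.f4 ∘ₗ f.f4
  comm_a := by ext x; simp [QHom.comm_a_apply]
  comm_b := by ext x; simp [QHom.comm_b_apply]
  comm_c := by ext x; simp [QHom.comm_c_apply]
  comm_d := by ext x; simp [QHom.comm_d_apply]

/-- The zero morphism. -/
def QHom.zeroHom (M N : QRep k) : QHom M N :=
  ⟨0, 0, 0, 0, by simp, by simp, by simp, by simp⟩

/-- Sum of two morphisms. -/
def QHom.add {M N : QRep k} (f g : QHom M N) : QHom M N :=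
  ⟨f.f1 + g.f1, f.f2 + g.f2, f.f3 + g.f3, f.f4 + g.f4,
    by simp [LinearMap.add_comp, LinearMap.comp_add, f.comm_a, g.comm_a],
    by simp [LinearMap.add_comp, LinearMap.comp_add, f.comm_b, g.comm_b],
    by simp [LinearMap.add_comp, LinearMap.comp_add, f.comm_c, g.comm_c],
    by simp [LinearMap.add_comp, LinearMap.comp_add, f.comm_d, g.comm_d]⟩

/-- Scalar multiples of the identity are endomorphisms. -/
def QHom.smulId (M : QRep k) (r : k) : QHom M M :=
  ⟨r • LinearMap.id, r • LinearMap.id, r • LinearMap.id, r • LinearMap.id,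
    by ext x; simp, by ext x; simp, by ext x; simp, by ext x; simp⟩

/-- The endomorphism of the total space of a representation induced by an
endomorphism of the representation. -/
def QHom.prodEnd {M : QRep k} (g : QHom M M) :
    Module.End k (((M.V1 × M.V2) × M.V3) × M.V4) :=
  ((g.f1.prodMap g.f2).prodMap g.f3).prodMap g.f4

/-- The endomorphism algebra `End(M)` of a representation `M`, realized as the
subalgebra of `End(V₁ × V₂ × V₃ × V₄)` consisting of the vertexwise endomorphisms
commuting with the structure maps. -/
def QEnd (M : QRep k) : Subalgebra k (Module.End k (((M.V1 × M.V2) × M.V3) × M.V4)) where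
  carrier := {F | ∃ g : QHom M M, F = g.prodEnd}
  zero_mem' := ⟨QHom.zeroHom M M, LinearMap.ext fun _ => rfl⟩
  one_mem' := ⟨QHom.idHom M, LinearMap.ext fun _ => rfl⟩
  add_mem' := by
    rintro a b ⟨g, rfl⟩ ⟨h, rfl⟩
    exact ⟨g.add h, LinearMap.ext fun _ => rfl⟩
  mul_mem' := by
    rintro a b ⟨g, rfl⟩ ⟨h, rfl⟩
    exact ⟨g.comp h, LinearMap.ext fun _ => rfl⟩
  algebraMap_mem' := fun r =>
    ⟨QHom.smulId M r, LinearMap.ext fun x => by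
      simp [Module.algebraMap_end_apply, QHom.prodEnd, QHom.smulId]⟩

variable (k)

/-- The special-tube representation `N_n = (kⁿ,kⁿ,kⁿ,kⁿ; J_n(0),id,id,id)`. -/
def Nrep (n : ℕ) : QRep k where
  V1 := Fin n → k
  V2 := Fin n → k
  V3 := Fin n → k
  V4 := Fin n → k
  ma := jordan k n 0
  mb := LinearMap.id
  mc := LinearMap.id
  md := LinearMap.id

/-- The endomorphism `(J_n(0), J_n(0), J_n(0), J_n(0))` of `N_n`. -/
def Jend (n : ℕ) : QHom (Nrep k n) (Nrep k n) :=
  ⟨jordan k n 0, jordan k n 0, jordan k n 0, jordan k n 0, rfl, by ext x; rfl, by ext x; rfl,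
    by ext x; rfl⟩


/-! ### Auxiliary lemmas for `stmt2` -/

section Stmt2Aux

variable {k : Type} [Field k] {n : ℕ}

lemma jordan_apply' (v : Fin n → k) (i : Fin n) :
    jordan k n 0 v i = if h : (i : ℕ) + 1 < n then v ⟨i + 1, h⟩ else 0 := by
  simp only [jordan, Matrix.mulVecLin_apply, Matrix.mulVec, dotProduct, Matrix.of_apply]
  split_ifs with h
  · rw [Finset.sum_eq_single (⟨(i : ℕ) + 1, h⟩ : Fin n)]
    · have : i ≠ (⟨(i : ℕ) + 1, h⟩ : Fin n) := by simp [Fin.ext_iff]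
      simp [this]
    · intro j _ hj
      have hne : ¬ ((i : ℕ) + 1 = (j : ℕ)) := fun hc => hj (Fin.ext hc.symm)
      simp [hne, ite_self]
    · simp
  · apply Finset.sum_eq_zero
    intro j _
    have h1 : ¬ ((i : ℕ) + 1 = (j : ℕ)) := by omega
    simp [h1, ite_self]

lemma jordan_pow_apply (m : ℕ) (v : Fin n → k) (i : Fin n) :
    ((jordan k n 0) ^ m) v i = if h : (i : ℕ) + m < n then v ⟨i + m, h⟩ else 0 := by
  induction m generalizing v i with
  | zero => simp [i.isLt]
  | succ m ih =>
    rw [pow_succ']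
    have : ((jordan k n 0 * (jordan k n 0) ^ m)) v i
        = (jordan k n 0) (((jordan k n 0) ^ m) v) i := rfl
    rw [this, jordan_apply']
    by_cases h1 : (i : ℕ) + 1 < n
    · rw [dif_pos h1, ih]
      simp only [Fin.val_mk]
      by_cases h2 : (i : ℕ) + (m + 1) < n
      · rw [dif_pos (by omega : (i : ℕ) + 1 + m < n), dif_pos h2]
        congr 1
        simp [Fin.ext_iff]; omega
      · rw [dif_neg (by omega), dif_neg h2]
    · rw [dif_neg h1, dif_neg (by omega)]

lemma jordan_pow_n : (jordan k n 0) ^ n = 0 :=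
  LinearMap.ext fun v => funext fun i => by
    rw [jordan_pow_apply, dif_neg (by omega)]; rfl

lemma jordan_pow_single (hn : 1 ≤ n) {m : ℕ} (hm : m < n) :
    ((jordan k n 0) ^ m) (Pi.single (⟨n - 1, by omega⟩ : Fin n) (1 : k))
      = Pi.single (⟨n - 1 - m, by omega⟩ : Fin n) 1 := by
  funext i
  rw [jordan_pow_apply]
  by_cases h1 : (i : ℕ) + m < n
  · rw [dif_pos h1]
    simp only [Pi.single_apply, Fin.ext_iff, Fin.val_mk]
    split_ifs <;> first | rfl | (exfalso; omega)
  · rw [dif_neg h1]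
    simp only [Pi.single_apply, Fin.ext_iff, Fin.val_mk]
    split_ifs <;> first | rfl | (exfalso; omega)

lemma jordan_sum_apply (hn : 1 ≤ n) (c : ℕ → k) (i : Fin n) :
    (∑ m ∈ Finset.range n, c m • (jordan k n 0) ^ m)
      (Pi.single (⟨n - 1, by omega⟩ : Fin n) (1 : k)) i = c (n - 1 - (i : ℕ)) := by
  rw [LinearMap.sum_apply, Finset.sum_apply]
  rw [Finset.sum_eq_single (n - 1 - (i : ℕ))]
  · rw [LinearMap.smul_apply, Pi.smul_apply, jordan_pow_single hn (by omega)]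
    have : i = (⟨n - 1 - (n - 1 - (i : ℕ)), by omega⟩ : Fin n) := by
      apply Fin.ext; simp only [Fin.val_mk]; omega
    rw [← this]
    simp
  · intro m hm hne
    rw [Finset.mem_range] at hm
    rw [LinearMap.smul_apply, Pi.smul_apply, jordan_pow_single hn hm]
    have : i ≠ (⟨n - 1 - m, by omega⟩ : Fin n) := by
      simp only [ne_eq, Fin.ext_iff, Fin.val_mk]; omega
    simp [Pi.single_apply, this]
  · intro h
    exact absurd (Finset.mem_range.mpr (by omega)) h

/-- Any endomorphism of `kⁿ` commuting with the nilpotent Jordan block is a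
polynomial in the Jordan block. -/
lemma jordan_commutant (hn : 1 ≤ n) (g : Module.End k (Fin n → k))
    (hg : g * jordan k n 0 = jordan k n 0 * g) :
    ∃ c : ℕ → k, g = ∑ m ∈ Finset.range n, c m • (jordan k n 0) ^ m := by
  set J := jordan k n 0 with hJ
  set elast : Fin n → k := Pi.single (⟨n - 1, by omega⟩ : Fin n) 1 with helast
  refine ⟨fun m => g elast ⟨n - 1 - m, by omega⟩, ?_⟩
  set c : ℕ → k := fun m => g elast ⟨n - 1 - m, by omega⟩ with hc
  set P : Module.End k (Fin n → k) := ∑ m ∈ Finset.range n, c m • J ^ m with hP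
  have hPe : P elast = g elast := by
    funext i
    rw [hP, helast, jordan_sum_apply hn c i]
    show g elast ⟨n - 1 - (n - 1 - (i : ℕ)), by omega⟩ = _
    have hidx : (⟨n - 1 - (n - 1 - (i : ℕ)), by omega⟩ : Fin n) = i :=
      Fin.ext (by simp only [Fin.val_mk]; omega)
    rw [hidx]
  have hcomm : ∀ a : ℕ, Commute (J ^ a) P := by
    intro a
    refine Commute.sum_right _ _ _ fun m _ => Commute.smul_right ?_ _
    exact (Commute.refl J).pow_pow a m
  have hgJ : ∀ a : ℕ, Commute g (J ^ a) := fun a => Commute.pow_right hg a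
  apply Module.Basis.ext (Pi.basisFun k (Fin n))
  intro j
  rw [Pi.basisFun_apply]
  have hj : Pi.single j (1 : k) = (J ^ ((n : ℕ) - 1 - (j : ℕ))) elast := by
    rw [helast, hJ, jordan_pow_single hn (by omega)]
    have hidx : (⟨n - 1 - (n - 1 - (j : ℕ)), by omega⟩ : Fin n) = j :=
      Fin.ext (by simp only [Fin.val_mk]; omega)
    rw [hidx]
  rw [hj]
  calc g ((J ^ (n - 1 - (j : ℕ))) elast) = (g * J ^ (n - 1 - (j : ℕ))) elast := rfl
    _ = (J ^ (n - 1 - (j : ℕ)) * g) elast := by rw [hgJ _]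
    _ = (J ^ (n - 1 - (j : ℕ))) (g elast) := rfl
    _ = (J ^ (n - 1 - (j : ℕ))) (P elast) := by rw [hPe]
    _ = (J ^ (n - 1 - (j : ℕ)) * P) elast := rfl
    _ = (P * J ^ (n - 1 - (j : ℕ))) elast := by rw [hcomm _]
    _ = P ((J ^ (n - 1 - (j : ℕ))) elast) := rfl

/-- If a polynomial kills the Jordan block, then `X^n` divides it. -/
lemma jordan_aeval_eq_zero (hn : 1 ≤ n) (p : Polynomial k)
    (hp : Polynomial.aeval (jordan k n 0) p = 0) :
    (Polynomial.X : Polynomial k) ^ n ∣ p := by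
  classical
  set J := jordan k n 0 with hJ
  set r : Polynomial k := p %ₘ (Polynomial.X ^ n) with hr
  have hmonic : (Polynomial.X ^ n : Polynomial k).Monic := Polynomial.monic_X_pow n
  have hsplit : r + Polynomial.X ^ n * (p /ₘ Polynomial.X ^ n) = p :=
    Polynomial.modByMonic_add_div p (Polynomial.X ^ n)
  have haevalr : Polynomial.aeval J r = 0 := by
    have : Polynomial.aeval J p =
        Polynomial.aeval J r + J ^ n * Polynomial.aeval J (p /ₘ Polynomial.X ^ n) := by
      conv_lhs => rw [← hsplit]
      simp [hJ]
    rw [hp, hJ] at this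
    rw [jordan_pow_n] at this
    simpa using this.symm
  have hrdeg : r.natDegree < n := by
    by_cases hr0 : r = 0
    · simp [hr0]; omega
    · have := Polynomial.degree_modByMonic_lt p hmonic
      rw [Polynomial.degree_X_pow] at this
      rw [← hr] at this
      exact Polynomial.natDegree_lt_iff_degree_lt hr0 |>.mpr this
  have hrzero : r = 0 := by
    have hsum : Polynomial.aeval J r
        = ∑ m ∈ Finset.range n, r.coeff m • J ^ m := by
      conv_lhs => rw [Polynomial.as_sum_range' r n hrdeg]
      rw [map_sum]
      refine Finset.sum_congr rfl fun m _ => ?_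
      rw [Polynomial.aeval_monomial, Algebra.smul_def]
    have hcoeff : ∀ d, d < n → r.coeff d = 0 := by
      intro d hd
      have h1 := jordan_sum_apply hn (fun m => r.coeff m) (⟨n - 1 - d, by omega⟩ : Fin n)
      rw [← hsum, haevalr] at h1
      simp only [Fin.val_mk] at h1
      have : n - 1 - (n - 1 - d) = d := by omega
      rw [this] at h1
      simpa using h1.symm
    refine Polynomial.ext fun d => ?_
    by_cases hd : d < n
    · simpa using hcoeff d hd
    · exact Polynomial.coeff_eq_zero_of_natDegree_lt (by omega)
  refine ⟨p /ₘ Polynomial.X ^ n, ?_⟩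
  conv_lhs => rw [← hsplit, hrzero]
  rw [zero_add]

end Stmt2Aux

section Stmt2Aux2

variable {k : Type} [Field k] {n : ℕ}

/-- The diagonal embedding `End V →ₐ End (((V×V)×V)×V)`. -/
def diag4 (k V : Type) [Field k] [AddCommGroup V] [Module k V] :
    Module.End k V →ₐ[k] Module.End k (((V × V) × V) × V) :=
  (LinearMap.prodMapAlgHom k ((V × V) × V) V).comp
    ((((LinearMap.prodMapAlgHom k (V × V) V).comp
        (((LinearMap.prodMapAlgHom k V V).comp
            ((AlgHom.id k (Module.End k V)).prod (AlgHom.id k (Module.End k V)))).prod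
          (AlgHom.id k (Module.End k V))))).prod
      (AlgHom.id k (Module.End k V)))

lemma diag4_apply (V : Type) [AddCommGroup V] [Module k V] (f : Module.End k V) :
    diag4 k V f = ((f.prodMap f).prodMap f).prodMap f := rfl

lemma diag4_injective (V : Type) [AddCommGroup V] [Module k V] :
    Function.Injective (diag4 k V) := by
  intro f g h
  ext v
  have := LinearMap.congr_fun h (((v, v), v), v)
  rw [diag4_apply, diag4_apply] at this
  exact congrArg (fun t => t.2) this

/-- The QHom with all four components equal to a given map commuting with the block. -/
def allHom (h : Module.End k (Fin n → k))
    (hcomm : h ∘ₗ jordan k n 0 = jordan k n 0 ∘ₗ h) : QHom (Nrep k n) (Nrep k n) :=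
  ⟨h, h, h, h, hcomm, by ext x; rfl, by ext x; rfl, by ext x; rfl⟩

lemma allHom_prodEnd (h : Module.End k (Fin n → k))
    (hcomm : h ∘ₗ jordan k n 0 = jordan k n 0 ∘ₗ h) :
    (allHom h hcomm).prodEnd = diag4 k (Fin n → k) h := rfl

/-- Components of any endomorphism of `Nrep`. -/
lemma endo_components (f : QHom (Nrep k n) (Nrep k n)) :
    (f.f1 = f.f2 ∧ f.f2 = f.f3 ∧ f.f3 = f.f4) ∧
      f.f1 ∘ₗ jordan k n 0 = jordan k n 0 ∘ₗ f.f1 := by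
  have hb : f.f3 = f.f1 := LinearMap.ext fun x => LinearMap.congr_fun f.comm_b x
  have hc : f.f4 = f.f2 := LinearMap.ext fun x => LinearMap.congr_fun f.comm_c x
  have hd : f.f4 = f.f3 := LinearMap.ext fun x => LinearMap.congr_fun f.comm_d x
  have ha : f.f2 ∘ₗ jordan k n 0 = jordan k n 0 ∘ₗ f.f1 := f.comm_a
  have h21 : f.f2 = f.f1 := by rw [← hc, hd, hb]
  refine ⟨⟨?_, ?_, ?_⟩, ?_⟩
  · rw [h21]
  · rw [h21, hb]
  · rw [hb, hc, h21]
  · rw [h21] at ha; exact ha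

lemma mk_isUnit_of_coeff (p : Polynomial k) (hp : p.coeff 0 ≠ 0) :
    IsUnit (Ideal.Quotient.mk (Ideal.span {(Polynomial.X : Polynomial k) ^ n}) p) := by
  set I := Ideal.span {(Polynomial.X : Polynomial k) ^ n} with hI
  have hXdvd : Polynomial.X ∣ (p - Polynomial.C (p.coeff 0)) := by
    rw [Polynomial.X_dvd_iff]; simp
  have hnil : IsNilpotent (Ideal.Quotient.mk I (p - Polynomial.C (p.coeff 0))) := by
    refine ⟨n, ?_⟩
    rw [← map_pow, Ideal.Quotient.eq_zero_iff_mem, hI]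
    exact Ideal.mem_span_singleton.mpr (pow_dvd_pow_of_dvd hXdvd n)
  have hCunit : IsUnit (Ideal.Quotient.mk I (Polynomial.C (p.coeff 0))) :=
    (Polynomial.isUnit_C.mpr (isUnit_iff_ne_zero.mpr hp)).map _
  have hsum : Ideal.Quotient.mk I p
      = Ideal.Quotient.mk I (Polynomial.C (p.coeff 0))
        + Ideal.Quotient.mk I (p - Polynomial.C (p.coeff 0)) := by
    rw [← map_add]; congr 1; ring
  rw [hsum]
  exact hnil.isUnit_add_left_of_commute hCunit (Commute.all _ _)

lemma quot_local (k : Type) [Field k] (n : ℕ) (hn : 1 ≤ n) :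
    IsLocalRing (Polynomial k ⧸ Ideal.span {(Polynomial.X : Polynomial k) ^ n}) := by
  have hne : Ideal.span {(Polynomial.X : Polynomial k) ^ n} ≠ ⊤ := by
    rw [Ne, Ideal.span_singleton_eq_top]
    intro hu
    exact Polynomial.not_isUnit_X (isUnit_of_dvd_unit (dvd_pow_self _ (by omega : n ≠ 0)) hu)
  have : Nontrivial (Polynomial k ⧸ Ideal.span {(Polynomial.X : Polynomial k) ^ n}) :=
    Ideal.Quotient.nontrivial_iff.mpr hne
  refine IsLocalRing.of_isUnit_or_isUnit_one_sub_self ?_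
  intro a
  obtain ⟨p, rfl⟩ := Ideal.Quotient.mk_surjective a
  by_cases hp : p.coeff 0 = 0
  · refine Or.inr ?_
    rw [← map_one (Ideal.Quotient.mk (Ideal.span {(Polynomial.X : Polynomial k) ^ n})), ← map_sub]
    exact mk_isUnit_of_coeff (1 - p) (by simp [hp])
  · exact Or.inl (mk_isUnit_of_coeff p hp)

/-- Generic helpers for the idempotent argument. -/
lemma proj_comp_id {V W1 W2 : Type} [Zero W1] [Zero W2]
    (fv : V → W1 × W2) (hsurj : Function.Surjective fv)
    (gv : W1 × W2 → V) (hfg : ∀ y, fv (gv y) = y)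
    (h : ∀ x, gv (((fv x).1, 0) : W1 × W2) = x) : ∀ b : W2, b = 0 := by
  have key : ∀ y : W1 × W2, ((y.1, (0 : W2)) : W1 × W2) = y := by
    intro y
    obtain ⟨x, rfl⟩ := hsurj y
    have := congrArg fv (h x)
    rw [hfg] at this
    exact this
  intro b
  exact (congrArg Prod.snd (key (0, b))).symm

lemma proj_comp_zero {V W1 W2 : Type} [Zero V] [Zero W1] [Zero W2]
    (fv : V → W1 × W2) (hsurj : Function.Surjective fv)
    (gv : W1 × W2 → V) (hinj : Function.Injective gv) (h0 : gv ((0 : W1), (0 : W2)) = 0)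
    (h : ∀ x, gv (((fv x).1, 0) : W1 × W2) = 0) : ∀ a : W1, a = 0 := by
  have key : ∀ y : W1 × W2, y.1 = 0 := by
    intro y
    obtain ⟨x, rfl⟩ := hsurj y
    have := hinj ((h x).trans h0.symm)
    exact congrArg Prod.fst this
  intro a
  exact key ((a, 0) : W1 × W2)

end Stmt2Aux2

section Stmt2Aux3

set_option maxHeartbeats 1000000
set_option synthInstance.maxHeartbeats 200000

variable {k : Type} [Field k] {n : ℕ}

lemma dsum_zero_or (M : QRep k) (hlocal : IsLocalRing (QEnd M)) (A B : QRep k)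
    (h : QIso M (A.dsum B)) : A.IsZeroRep ∨ B.IsZeroRep := by
  classical
  obtain ⟨f, hb1, hb2, hb3, hb4⟩ := h
  let E1 := LinearEquiv.ofBijective f.f1 hb1
  let E2 := LinearEquiv.ofBijective f.f2 hb2
  let E3 := LinearEquiv.ofBijective f.f3 hb3
  let E4 := LinearEquiv.ofBijective f.f4 hb4
  have hE1 : ∀ z, f.f1 (E1.symm z) = z := fun z => E1.apply_symm_apply z
  have hE2 : ∀ z, f.f2 (E2.symm z) = z := fun z => E2.apply_symm_apply z
  have hE3 : ∀ z, f.f3 (E3.symm z) = z := fun z => E3.apply_symm_apply z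
  have hE4 : ∀ z, f.f4 (E4.symm z) = z := fun z => E4.apply_symm_apply z
  let gg : QHom (A.dsum B) (M) :=
    { f1 := E1.symm.toLinearMap
      f2 := E2.symm.toLinearMap
      f3 := E3.symm.toLinearMap
      f4 := E4.symm.toLinearMap
      comm_a := by
        refine LinearMap.ext fun y => ?_
        apply E2.injective
        show f.f2 (E2.symm ((A.dsum B).ma y)) = f.f2 (M.ma (E1.symm y))
        rw [hE2, f.comm_a_apply, hE1]
      comm_b := by
        refine LinearMap.ext fun y => ?_
        apply E3.injective
        show f.f3 (E3.symm ((A.dsum B).mb y)) = f.f3 (M.mb (E1.symm y))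
        rw [hE3, f.comm_b_apply, hE1]
      comm_c := by
        refine LinearMap.ext fun y => ?_
        apply E4.injective
        show f.f4 (E4.symm ((A.dsum B).mc y)) = f.f4 (M.mc (E2.symm y))
        rw [hE4, f.comm_c_apply, hE2]
      comm_d := by
        refine LinearMap.ext fun y => ?_
        apply E4.injective
        show f.f4 (E4.symm ((A.dsum B).md y)) = f.f4 (M.md (E3.symm y))
        rw [hE4, f.comm_d_apply, hE3] }
  let piH : QHom (A.dsum B) (A.dsum B) :=
    { f1 := LinearMap.prodMap LinearMap.id 0
      f2 := LinearMap.prodMap LinearMap.id 0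
      f3 := LinearMap.prodMap LinearMap.id 0
      f4 := LinearMap.prodMap LinearMap.id 0
      comm_a := by
        refine LinearMap.ext fun x => ?_
        show ((A.ma x.1, (0 : B.V2)) : A.V2 × B.V2) = (A.ma x.1, B.ma 0)
        rw [map_zero]
      comm_b := by
        refine LinearMap.ext fun x => ?_
        show ((A.mb x.1, (0 : B.V3)) : A.V3 × B.V3) = (A.mb x.1, B.mb 0)
        rw [map_zero]
      comm_c := by
        refine LinearMap.ext fun x => ?_
        show ((A.mc x.1, (0 : B.V4)) : A.V4 × B.V4) = (A.mc x.1, B.mc 0)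
        rw [map_zero]
      comm_d := by
        refine LinearMap.ext fun x => ?_
        show ((A.md x.1, (0 : B.V4)) : A.V4 × B.V4) = (A.md x.1, B.md 0)
        rw [map_zero] }
  let eH : QHom (M) (M) := gg.comp (piH.comp f)
  let E : QEnd (M) := ⟨eH.prodEnd, ⟨eH, rfl⟩⟩
  have hpi1 : ∀ u : A.V1 × B.V1, piH.f1 (piH.f1 u) = piH.f1 u := fun u => by
    show ((u.1, (0 : B.V1)) : A.V1 × B.V1) = _; rfl
  have hpi2 : ∀ u : A.V2 × B.V2, piH.f2 (piH.f2 u) = piH.f2 u := fun u => by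
    show ((u.1, (0 : B.V2)) : A.V2 × B.V2) = _; rfl
  have hpi3 : ∀ u : A.V3 × B.V3, piH.f3 (piH.f3 u) = piH.f3 u := fun u => by
    show ((u.1, (0 : B.V3)) : A.V3 × B.V3) = _; rfl
  have hpi4 : ∀ u : A.V4 × B.V4, piH.f4 (piH.f4 u) = piH.f4 u := fun u => by
    show ((u.1, (0 : B.V4)) : A.V4 × B.V4) = _; rfl
  have hid1 : ∀ v, eH.f1 (eH.f1 v) = eH.f1 v := by
    intro v
    show E1.symm (piH.f1 (f.f1 (E1.symm (piH.f1 (f.f1 v))))) = E1.symm (piH.f1 (f.f1 v))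
    rw [hE1]; exact congrArg E1.symm (hpi1 _)
  have hid2 : ∀ v, eH.f2 (eH.f2 v) = eH.f2 v := by
    intro v
    show E2.symm (piH.f2 (f.f2 (E2.symm (piH.f2 (f.f2 v))))) = E2.symm (piH.f2 (f.f2 v))
    rw [hE2]; exact congrArg E2.symm (hpi2 _)
  have hid3 : ∀ v, eH.f3 (eH.f3 v) = eH.f3 v := by
    intro v
    show E3.symm (piH.f3 (f.f3 (E3.symm (piH.f3 (f.f3 v))))) = E3.symm (piH.f3 (f.f3 v))
    rw [hE3]; exact congrArg E3.symm (hpi3 _)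
  have hid4 : ∀ v, eH.f4 (eH.f4 v) = eH.f4 v := by
    intro v
    show E4.symm (piH.f4 (f.f4 (E4.symm (piH.f4 (f.f4 v))))) = E4.symm (piH.f4 (f.f4 v))
    rw [hE4]; exact congrArg E4.symm (hpi4 _)
  have hidem : E * E = E := by
    apply Subtype.ext
    show eH.prodEnd ∘ₗ eH.prodEnd = eH.prodEnd
    refine LinearMap.ext fun x => ?_
    show (((eH.f1 (eH.f1 x.1.1.1), eH.f2 (eH.f2 x.1.1.2)), eH.f3 (eH.f3 x.1.2)),
        eH.f4 (eH.f4 x.2)) = (((eH.f1 x.1.1.1, eH.f2 x.1.1.2), eH.f3 x.1.2), eH.f4 x.2)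
    rw [hid1, hid2, hid3, hid4]
  haveI := hlocal
  have hdich : E = 0 ∨ E = 1 := by
    have h0 : E * (1 - E) = 0 := by rw [mul_sub E 1 E, mul_one, hidem, sub_self]
    rcases IsLocalRing.isUnit_or_isUnit_of_add_one (a := E) (b := 1 - E)
      (by abel) with hu | hu
    · right
      have := hu.mul_left_cancel (h0.trans (mul_zero E).symm)
      exact (sub_eq_zero.mp this).symm
    · left
      exact hu.mul_right_cancel (h0.trans (zero_mul (1 - E)).symm)
  rcases hdich with hzero | hone
  · left
    have hval : eH.prodEnd = 0 := congrArg Subtype.val hzero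
    have hc1 : ∀ x, eH.f1 x = 0 := fun x =>
      congrArg (fun t => t.1.1.1) (LinearMap.congr_fun hval (((x, 0), 0), 0))
    have hc2 : ∀ x, eH.f2 x = 0 := fun x =>
      congrArg (fun t => t.1.1.2) (LinearMap.congr_fun hval (((0, x), 0), 0))
    have hc3 : ∀ x, eH.f3 x = 0 := fun x =>
      congrArg (fun t => t.1.2) (LinearMap.congr_fun hval (((0, 0), x), 0))
    have hc4 : ∀ x, eH.f4 x = 0 := fun x =>
      congrArg (fun t => t.2) (LinearMap.congr_fun hval (((0, 0), 0), x))
    refine ⟨subsingleton_of_forall_eq 0 ?_, subsingleton_of_forall_eq 0 ?_,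
      subsingleton_of_forall_eq 0 ?_, subsingleton_of_forall_eq 0 ?_⟩
    · exact proj_comp_zero f.f1 hb1.2 E1.symm E1.symm.injective (map_zero _) hc1
    · exact proj_comp_zero f.f2 hb2.2 E2.symm E2.symm.injective (map_zero _) hc2
    · exact proj_comp_zero f.f3 hb3.2 E3.symm E3.symm.injective (map_zero _) hc3
    · exact proj_comp_zero f.f4 hb4.2 E4.symm E4.symm.injective (map_zero _) hc4
  · right
    have hval : eH.prodEnd = LinearMap.id := congrArg Subtype.val hone
    have hc1 : ∀ x, eH.f1 x = x := fun x =>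
      congrArg (fun t => t.1.1.1) (LinearMap.congr_fun hval (((x, 0), 0), 0))
    have hc2 : ∀ x, eH.f2 x = x := fun x =>
      congrArg (fun t => t.1.1.2) (LinearMap.congr_fun hval (((0, x), 0), 0))
    have hc3 : ∀ x, eH.f3 x = x := fun x =>
      congrArg (fun t => t.1.2) (LinearMap.congr_fun hval (((0, 0), x), 0))
    have hc4 : ∀ x, eH.f4 x = x := fun x =>
      congrArg (fun t => t.2) (LinearMap.congr_fun hval (((0, 0), 0), x))
    refine ⟨subsingleton_of_forall_eq 0 ?_, subsingleton_of_forall_eq 0 ?_,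
      subsingleton_of_forall_eq 0 ?_, subsingleton_of_forall_eq 0 ?_⟩
    · exact proj_comp_id f.f1 hb1.2 E1.symm hE1 hc1
    · exact proj_comp_id f.f2 hb2.2 E2.symm hE2 hc2
    · exact proj_comp_id f.f3 hb3.2 E3.symm hE3 hc3
    · exact proj_comp_id f.f4 hb4.2 E4.symm hE4 hc4

end Stmt2Aux3

set_option maxHeartbeats 1000000
set_option synthInstance.maxHeartbeats 1000000

/-- every endomorphism of `N_n` has `f₁ = f₂ = f₃ = f₄` with
`f₁` commuting with `J_n(0)`; the `k`-algebra map `k[X]/(Xⁿ) → End(N_n)` sending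
the class of `X` to `(J_n(0),J_n(0),J_n(0),J_n(0))` is an isomorphism of
`k`-algebras; in particular `End(N_n)` is local and `N_n` is indecomposable. -/
theorem stmt2 (k : Type) [Field k] (n : ℕ) (hn : 1 ≤ n) :
    (∀ f : QHom (Nrep k n) (Nrep k n),
      (f.f1 = f.f2 ∧ f.f2 = f.f3 ∧ f.f3 = f.f4) ∧
      f.f1 ∘ₗ jordan k n 0 = jordan k n 0 ∘ₗ f.f1) ∧
    (∃ e : (Polynomial k ⧸ Ideal.span {(Polynomial.X : Polynomial k) ^ n}) ≃ₐ[k]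
        QEnd (Nrep k n),
      e (Ideal.Quotient.mk _ Polynomial.X) = ⟨(Jend k n).prodEnd, ⟨Jend k n, rfl⟩⟩) ∧
    IsLocalRing (QEnd (Nrep k n)) ∧ (Nrep k n).Indecomposable := by
  classical
  have part1 : ∀ f : QHom (Nrep k n) (Nrep k n),
      (f.f1 = f.f2 ∧ f.f2 = f.f3 ∧ f.f3 = f.f4) ∧
        f.f1 ∘ₗ jordan k n 0 = jordan k n 0 ∘ₗ f.f1 := fun f => endo_components f
  set I : Ideal (Polynomial k) := Ideal.span {(Polynomial.X : Polynomial k) ^ n} with hI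
  let T : QEnd (Nrep k n) := ⟨(Jend k n).prodEnd, ⟨Jend k n, rfl⟩⟩
  have hcoe : ∀ p : Polynomial k,
      ((Polynomial.aeval T p : QEnd (Nrep k n)) : Module.End k
        ((((Nrep k n).V1 × (Nrep k n).V2) × (Nrep k n).V3) × (Nrep k n).V4))
        = diag4 k (Fin n → k) (Polynomial.aeval (jordan k n 0) p) := by
    have hhom : ((QEnd (Nrep k n)).val.comp (Polynomial.aeval T))
        = (diag4 k (Fin n → k)).comp (Polynomial.aeval (jordan k n 0)) := by
      apply Polynomial.algHom_ext
      show (QEnd (Nrep k n)).val ((Polynomial.aeval T) Polynomial.X)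
          = diag4 k (Fin n → k) ((Polynomial.aeval (jordan k n 0)) Polynomial.X)
      rw [Polynomial.aeval_X, Polynomial.aeval_X]
      rfl
    exact fun p => AlgHom.congr_fun hhom p
  have hTn : T ^ n = 0 := by
    apply Subtype.ext
    have h1 := hcoe (Polynomial.X ^ n)
    rw [map_pow, Polynomial.aeval_X, map_pow, Polynomial.aeval_X, jordan_pow_n, map_zero] at h1
    exact h1
  have hker : ∀ a ∈ I, Polynomial.aeval T a = 0 := by
    intro a ha
    obtain ⟨q, rfl⟩ := Ideal.mem_span_singleton.mp ha
    rw [map_mul, map_pow, Polynomial.aeval_X, hTn, zero_mul]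
  let ψ : (Polynomial k ⧸ I) →ₐ[k] QEnd (Nrep k n) :=
    Ideal.Quotient.liftₐ I (Polynomial.aeval T) hker
  have hψmk : ∀ p, ψ (Ideal.Quotient.mk I p) = Polynomial.aeval T p := by
    intro p
    show Ideal.Quotient.liftₐ I (Polynomial.aeval T) hker (Ideal.Quotient.mk I p) = _
    rfl
  have hsurj : Function.Surjective ψ := by
    rintro ⟨F, hF⟩
    have hF' : ∃ g : QHom (Nrep k n) (Nrep k n), F = g.prodEnd := hF
    obtain ⟨g, rfl⟩ := hF'
    obtain ⟨⟨h12, h23, h34⟩, hcm⟩ := endo_components g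
    obtain ⟨c, hc⟩ := jordan_commutant hn g.f1 hcm
    refine ⟨Ideal.Quotient.mk I
      (∑ m ∈ Finset.range n, Polynomial.C (c m) * Polynomial.X ^ m), ?_⟩
    apply Subtype.ext
    rw [hψmk, hcoe]
    have haev : Polynomial.aeval (jordan k n 0)
        (∑ m ∈ Finset.range n, Polynomial.C (c m) * Polynomial.X ^ m)
        = ∑ m ∈ Finset.range n, c m • (jordan k n 0) ^ m := by
      rw [map_sum]
      refine Finset.sum_congr rfl fun m _ => ?_
      rw [map_mul, Polynomial.aeval_C, map_pow, Polynomial.aeval_X]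
      exact (Algebra.smul_def _ _).symm
    rw [haev, ← hc]
    have e2 : g.f2 = g.f1 := h12.symm
    have e3 : g.f3 = g.f1 := (h12.trans h23).symm
    have e4 : g.f4 = g.f1 := (h12.trans (h23.trans h34)).symm
    show ((g.f1.prodMap g.f1).prodMap g.f1).prodMap g.f1
        = ((g.f1.prodMap g.f2).prodMap g.f3).prodMap g.f4
    rw [e2, e3, e4]; rfl
  have hinj : Function.Injective ψ := by
    rw [injective_iff_map_eq_zero]
    intro a ha
    obtain ⟨p, rfl⟩ := Ideal.Quotient.mk_surjective a
    rw [hψmk] at ha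
    have h2 : diag4 k (Fin n → k) (Polynomial.aeval (jordan k n 0) p) = 0 := by
      rw [← hcoe p, ha]
      rfl
    have h3 : Polynomial.aeval (jordan k n 0) p = 0 :=
      diag4_injective _ (by rw [h2, map_zero])
    rw [Ideal.Quotient.eq_zero_iff_mem]
    exact Ideal.mem_span_singleton.mpr (jordan_aeval_eq_zero hn p h3)
  let e : (Polynomial k ⧸ I) ≃ₐ[k] QEnd (Nrep k n) :=
    AlgEquiv.ofBijective ψ ⟨hinj, hsurj⟩
  haveI hq := quot_local k n hn
  have hloc : IsLocalRing (QEnd (Nrep k n)) := by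
    haveI : Nontrivial (QEnd (Nrep k n)) := by
      obtain ⟨x, y, hxy⟩ := exists_pair_ne (Polynomial k ⧸ I)
      exact ⟨ψ x, ψ y, fun h => hxy (hinj h)⟩
    refine ⟨fun {a b} hab => ?_⟩
    obtain ⟨a', rfl⟩ := hsurj a
    obtain ⟨b', rfl⟩ := hsurj b
    have hab' : a' + b' = 1 := by
      apply hinj
      rw [map_add, map_one, hab]
    rcases IsLocalRing.isUnit_or_isUnit_of_add_one hab' with h | h
    · exact Or.inl (h.map ψ)
    · exact Or.inr (h.map ψ)
  refine ⟨part1, ⟨e, ?_⟩, hloc, ?_, ?_⟩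
  · show ψ (Ideal.Quotient.mk I Polynomial.X) = T
    rw [hψmk, Polynomial.aeval_X]
  · intro hz
    obtain ⟨h1, -, -, -⟩ := hz
    have h0 : (Pi.single (⟨0, by omega⟩ : Fin n) (1 : k) : Fin n → k) = 0 := h1.allEq _ _
    have h2 : (1 : k) = 0 := by simpa using congrFun h0 ⟨0, by omega⟩
    exact one_ne_zero h2
  · exact fun A B hiso => dsum_zero_or (Nrep k n) hloc A B hiso
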